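/- arXiv:2603.13058 — 2 statements merged into one kernel-verified Lean document; each statement's English description precedes it below -/
import Mathlib

section
/- With mid(l,r) = ⌊(l+r)/2⌋, the recursively built range tree over [1,n] (root ⟨1,n⟩, children of ⟨l,r⟩ being ⟨l, mid(l,r)⟩ and ⟨mid(l,r)+1, r⟩, leaves when l = r) is strongly balanced: at every internal node, the heights of the two subtrees differ by at most one. -/
inductive RTree : ℕ → ℕ → Type where
  | leaf (l : ℕ) : RTree l l
  | node {l m r : ℕ} (h1 : l ≤ m) (h2 : m < r)
      (L : RTree l m) (R : RTree (m + 1) r) : RTree l r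

def RTree.height : ∀ {l r : ℕ}, RTree l r → ℕ
  | _, _, .leaf _ => 0
  | _, _, .node _ _ L R => 1 + max L.height R.height

/-- Strongly balanced: sibling subtree heights differ by at most one. -/
def RTree.Balanced : ∀ {l r : ℕ}, RTree l r → Prop
  | _, _, .leaf _ => True
  | _, _, .node _ _ L R =>
      L.Balanced ∧ R.Balanced ∧ L.height ≤ R.height + 1 ∧ R.height ≤ L.height + 1

/-- Every internal node splits its range at `mid(l,r) = ⌊(l+r)/2⌋`. -/
def RTree.MidSplit : ∀ {l r : ℕ}, RTree l r → Prop
  | _, _, .leaf _ => True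
  | _, _, @RTree.node l m r _ _ L R =>
      m = (l + r) / 2 ∧ L.MidSplit ∧ R.MidSplit

lemma clog_two_double {k : ℕ} (hk : 1 ≤ k) : Nat.clog 2 (2 * k) = Nat.clog 2 k + 1 := by
  rw [Nat.clog_of_two_le (by norm_num) (by omega)]
  have h : (2 * k + 2 - 1) / 2 = k := by omega
  rw [h]

lemma midsplit_height : ∀ {l r : ℕ} (T : RTree l r), T.MidSplit →
    T.Balanced ∧ T.height = Nat.clog 2 (r - l + 1) := by
  intro l r T
  induction T with
  | leaf l => intro _; simp [RTree.Balanced, RTree.height, Nat.clog_of_right_le_one]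
  | node h1 h2 L R ihL ihR =>
    rename_i l m r
    intro hms
    obtain ⟨hm, hL, hR⟩ := hms
    obtain ⟨bL, eL⟩ := ihL hL
    obtain ⟨bR, eR⟩ := ihR hR
    have hml : m - l + 1 = (r - l + 1 + 1) / 2 := by omega
    have hrm : r - (m + 1) + 1 = (r - l + 1) / 2 := by omega
    set n := r - l + 1 with hn
    have hn2 : 2 ≤ n := by omega
    rw [hml] at eL
    rw [hrm] at eR
    have hle : Nat.clog 2 (n / 2) ≤ Nat.clog 2 ((n + 1) / 2) :=
      Nat.clog_mono_right _ (by omega)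
    have hle2 : Nat.clog 2 ((n + 1) / 2) ≤ Nat.clog 2 (n / 2) + 1 := by
      calc Nat.clog 2 ((n + 1) / 2) ≤ Nat.clog 2 (2 * (n / 2)) :=
            Nat.clog_mono_right _ (by omega)
        _ = Nat.clog 2 (n / 2) + 1 := clog_two_double (by omega)
    have hrec : Nat.clog 2 n = Nat.clog 2 ((n + 1) / 2) + 1 :=
      Nat.clog_of_two_le (by norm_num) hn2
    refine ⟨⟨bL, bR, by omega, by omega⟩, ?_⟩
    show 1 + max L.height R.height = Nat.clog 2 n
    omega

lemma exists_midsplit : ∀ (n l r : ℕ), r - l = n → l ≤ r →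
    ∃ T : RTree l r, T.MidSplit := by
  intro n
  induction n using Nat.strong_induction_on with
  | _ n ih =>
    intro l r hn hlr
    rcases eq_or_lt_of_le hlr with h | h
    · subst h; exact ⟨.leaf l, trivial⟩
    · have h1 : l ≤ (l + r) / 2 := by omega
      have h2 : (l + r) / 2 < r := by omega
      obtain ⟨L, hL⟩ := ih ((l + r) / 2 - l) (by omega) l _ rfl h1
      obtain ⟨R, hR⟩ := ih (r - ((l + r) / 2 + 1)) (by omega) ((l + r) / 2 + 1) r rfl (by omega)
      exact ⟨.node h1 h2 L R, rfl, hL, hR⟩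

/-- With `mid(l,r) = ⌊(l+r)/2⌋`, the recursively built range tree over any
range exists, and every range tree built with this middle-point function is
strongly balanced. -/
theorem midsplit_balanced :
    (∀ l r : ℕ, l ≤ r → ∃ T : RTree l r, T.MidSplit) ∧
    (∀ (l r : ℕ) (T : RTree l r), T.MidSplit → T.Balanced) := by
  exact ⟨fun l r h => exists_midsplit _ l r rfl h,
    fun l r T h => (midsplit_height T h).1⟩
end

section
/- Decomposition of any interval into tree ranges: Let T be the range tree over [1,n] built with mid(l,r) = ⌊(l+r)/2⌋. Then for any 1 ≤ a ≤ b ≤ n, the interval [a,b] can be written as a disjoint concatenation of at most 2·⌈log_2 n⌉ + 2 ranges each of which labels a node of T, listed in increasing order. -/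
/-- `MidNode l r a b`: the range `[a,b]` labels a node of the range tree over
`[l,r]` built with `mid(l,r) = ⌊(l+r)/2⌋`. -/
inductive MidNode : ℕ → ℕ → ℕ → ℕ → Prop where
  | refl (l r : ℕ) : MidNode l r l r
  | left {l r a b : ℕ} : l < r → MidNode l ((l + r) / 2) a b → MidNode l r a b
  | right {l r a b : ℕ} : l < r → MidNode ((l + r) / 2 + 1) r a b → MidNode l r a b

def GoodList (l r a b : ℕ) (L : List (ℕ × ℕ)) : Prop :=
  L ≠ [] ∧ (∀ p ∈ L, MidNode l r p.1 p.2) ∧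
  L.head?.map Prod.fst = some a ∧ L.getLast?.map Prod.snd = some b ∧
  List.Chain' (fun p q : ℕ × ℕ => q.1 = p.2 + 1) L ∧ ∀ p ∈ L, p.1 ≤ p.2

lemma good_single {l r a b : ℕ} (h : MidNode l r a b) (hab : a ≤ b) :
    GoodList l r a b [(a, b)] := by
  refine ⟨by simp, ?_, by simp, by simp, List.isChain_singleton _, ?_⟩ <;> simp_all

lemma good_mono {l r l' r' a b : ℕ} {L : List (ℕ × ℕ)} (h : GoodList l' r' a b L)
    (hlift : ∀ x y, MidNode l' r' x y → MidNode l r x y) : GoodList l r a b L := by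
  obtain ⟨h1, h2, h3, h4, h5, h6⟩ := h
  exact ⟨h1, fun p hp => hlift _ _ (h2 p hp), h3, h4, h5, h6⟩

lemma good_append {l r a m b : ℕ} {L1 L2 : List (ℕ × ℕ)}
    (h1 : GoodList l r a m L1) (h2 : GoodList l r (m + 1) b L2) :
    GoodList l r a b (L1 ++ L2) := by
  obtain ⟨n1, t1, hd1, ls1, c1, le1⟩ := h1
  obtain ⟨n2, t2, hd2, ls2, c2, le2⟩ := h2
  refine ⟨by simp [n1], ?_, ?_, ?_, ?_, ?_⟩
  · intro p hp; rcases List.mem_append.1 hp with h | h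
    · exact t1 p h
    · exact t2 p h
  · rw [List.head?_append_of_ne_nil _ n1]; exact hd1
  · obtain ⟨p, hp, hps⟩ := Option.map_eq_some_iff.1 ls2
    rw [List.getLast?_append, hp]
    simp [hps]
  · apply List.isChain_append.2
    refine ⟨c1, c2, fun x hx y hy => ?_⟩
    have hx' : L1.getLast?.map Prod.snd = some x.2 := by rw [hx]; rfl
    have hy' : L2.head?.map Prod.fst = some y.1 := by rw [hy]; rfl
    rw [ls1] at hx'; rw [hd2] at hy'
    simp only [Option.some.injEq] at hx' hy'
    omega
  · intro p hp; rcases List.mem_append.1 hp with h | h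
    · exact le1 p h
    · exact le2 p h

lemma clog_left_child {l r : ℕ} (h : l < r) :
    Nat.clog 2 ((l + r) / 2 - l + 1) + 1 ≤ Nat.clog 2 (r - l + 1) := by
  have h1 : (l + r) / 2 - l + 1 ≤ (r - l + 1 + 1) / 2 := by omega
  have h2 : Nat.clog 2 (r - l + 1) = Nat.clog 2 ((r - l + 1 + 1) / 2) + 1 :=
    Nat.clog_of_two_le (by norm_num) (by omega)
  have := Nat.clog_mono_right 2 h1
  omega

lemma clog_right_child {l r : ℕ} (h : l < r) :
    Nat.clog 2 (r - ((l + r) / 2 + 1) + 1) + 1 ≤ Nat.clog 2 (r - l + 1) := by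
  have h1 : r - ((l + r) / 2 + 1) + 1 ≤ (r - l + 1 + 1) / 2 := by omega
  have h2 : Nat.clog 2 (r - l + 1) = Nat.clog 2 ((r - l + 1 + 1) / 2) + 1 :=
    Nat.clog_of_two_le (by norm_num) (by omega)
  have := Nat.clog_mono_right 2 h1
  omega

/-- Suffix query `[a,r]` on the tree over `[l,r]`. -/
lemma suffix_dec : ∀ k l r a : ℕ, r ≤ l + k → l ≤ a → a ≤ r →
    ∃ L, GoodList l r a r L ∧ L.length ≤ Nat.clog 2 (r - l + 1) + 1 := by
  intro k
  induction k with
  | zero =>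
    intro l r a hk h1 h2
    have hn : MidNode l r a r := by
      have e1 : a = l := by omega
      have e2 : r = l := by omega
      rw [e1, e2]; exact MidNode.refl l l
    exact ⟨[(a, r)], good_single hn h2, by simp⟩
  | succ k ih =>
    intro l r a hk h1 h2
    rcases eq_or_lt_of_le h1 with rfl | hla
    · exact ⟨[(l, r)], good_single (MidNode.refl l r) h2, by simp⟩
    · have hlr : l < r := lt_of_lt_of_le hla h2
      have hm : (l + r) / 2 < r := by omega
      set m := (l + r) / 2 with hmd
      rcases le_or_gt a m with ham | ham
      · -- a ≤ m : suffix in left child, plus the right child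
        obtain ⟨L, hL, hlen⟩ := ih l m a (by omega) (by omega) ham
        have hL' : GoodList l r a m L :=
          good_mono hL (fun x y hxy => MidNode.left hlr hxy)
        have hR : GoodList l r (m + 1) r [(m + 1, r)] :=
          good_single (MidNode.right hlr (MidNode.refl _ _)) (by omega)
        refine ⟨L ++ [(m + 1, r)], good_append hL' hR, ?_⟩
        have := clog_left_child hlr
        rw [← hmd] at this
        simp only [List.length_append, List.length_singleton]
        omega
      · -- a ≥ m+1 : suffix in right child
        obtain ⟨L, hL, hlen⟩ := ih (m + 1) r a (by omega) (by omega) h2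
        refine ⟨L, good_mono hL (fun x y hxy => MidNode.right hlr hxy), ?_⟩
        have := clog_right_child hlr
        rw [← hmd] at this
        omega

/-- Prefix query `[l,b]` on the tree over `[l,r]`. -/
lemma prefix_dec : ∀ k l r b : ℕ, r ≤ l + k → l ≤ b → b ≤ r →
    ∃ L, GoodList l r l b L ∧ L.length ≤ Nat.clog 2 (r - l + 1) + 1 := by
  intro k
  induction k with
  | zero =>
    intro l r b hk h1 h2
    have hn : MidNode l r l b := by
      have e1 : b = l := by omega
      have e2 : r = l := by omega
      rw [e1, e2]; exact MidNode.refl l l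
    exact ⟨[(l, b)], good_single hn h1, by simp⟩
  | succ k ih =>
    intro l r b hk h1 h2
    rcases eq_or_lt_of_le h2 with rfl | hbr
    · exact ⟨[(l, b)], good_single (MidNode.refl l b) h1, by simp⟩
    · have hlr : l < r := lt_of_le_of_lt h1 hbr
      have hm : (l + r) / 2 < r := by omega
      set m := (l + r) / 2 with hmd
      rcases le_or_gt b m with hbm | hbm
      · -- b ≤ m : prefix in left child
        obtain ⟨L, hL, hlen⟩ := ih l m b (by omega) h1 hbm
        refine ⟨L, good_mono hL (fun x y hxy => MidNode.left hlr hxy), ?_⟩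
        have := clog_left_child hlr
        rw [← hmd] at this
        omega
      · -- b > m : full left child plus prefix in right child
        obtain ⟨L, hL, hlen⟩ := ih (m + 1) r b (by omega) (by omega) (by omega)
        have hL' : GoodList l r (m + 1) b L :=
          good_mono hL (fun x y hxy => MidNode.right hlr hxy)
        have hF : GoodList l r l m [(l, m)] :=
          good_single (MidNode.left hlr (MidNode.refl _ _)) (by omega)
        refine ⟨[(l, m)] ++ L, good_append hF hL', ?_⟩
        have := clog_right_child hlr
        rw [← hmd] at this
        simp only [List.length_append, List.length_singleton]
        omega

lemma main_dec : ∀ k l r a b : ℕ, r ≤ l + k → l ≤ a → a ≤ b → b ≤ r →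
    ∃ L, GoodList l r a b L ∧ L.length ≤ 2 * Nat.clog 2 (r - l + 1) + 2 := by
  intro k
  induction k with
  | zero =>
    intro l r a b hk h1 h2 h3
    have hn : MidNode l r a b := by
      have e1 : a = l := by omega
      have e2 : b = l := by omega
      have e3 : r = l := by omega
      rw [e1, e2, e3]; exact MidNode.refl l l
    exact ⟨[(a, b)], good_single hn h2, by simp⟩
  | succ k ih =>
    intro l r a b hk h1 h2 h3
    rcases eq_or_lt_of_le h1 with heq | hla
    · obtain ⟨L, hL, hlen⟩ := prefix_dec (k + 1) l r b hk (by omega) h3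
      exact ⟨L, by rw [← heq]; exact hL, by omega⟩
    rcases eq_or_lt_of_le h3 with heq | hbr
    · obtain ⟨L, hL, hlen⟩ := suffix_dec (k + 1) l r a hk h1 (by omega)
      exact ⟨L, by rw [heq]; exact hL, by omega⟩
    have hlr : l < r := by omega
    have hm : (l + r) / 2 < r := by omega
    set m := (l + r) / 2 with hmd
    rcases le_or_gt b m with hbm | hbm
    · obtain ⟨L, hL, hlen⟩ := ih l m a b (by omega) h1 h2 hbm
      refine ⟨L, good_mono hL (fun x y hxy => MidNode.left hlr hxy), ?_⟩
      have h1' : m - l + 1 ≤ r - l + 1 := by omega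
      have := Nat.clog_mono_right 2 h1'
      omega
    rcases le_or_gt (m + 1) a with ham | ham
    · obtain ⟨L, hL, hlen⟩ := ih (m + 1) r a b (by omega) ham h2 h3
      refine ⟨L, good_mono hL (fun x y hxy => MidNode.right hlr hxy), ?_⟩
      have h1' : r - (m + 1) + 1 ≤ r - l + 1 := by omega
      have := Nat.clog_mono_right 2 h1'
      omega
    · -- a ≤ m < b : suffix on left child, prefix on right child
      obtain ⟨L1, hL1, hlen1⟩ := suffix_dec k l m a (by omega) h1 (by omega)
      obtain ⟨L2, hL2, hlen2⟩ := prefix_dec k (m + 1) r b (by omega) (by omega) (by omega)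
      have hL1' : GoodList l r a m L1 :=
        good_mono hL1 (fun x y hxy => MidNode.left hlr hxy)
      have hL2' : GoodList l r (m + 1) b L2 :=
        good_mono hL2 (fun x y hxy => MidNode.right hlr hxy)
      refine ⟨L1 ++ L2, good_append hL1' hL2', ?_⟩
      have c1 := clog_left_child hlr
      have c2 := clog_right_child hlr
      rw [← hmd] at c1 c2
      simp only [List.length_append]
      omega

/-- Decomposition of any interval into tree ranges: for `1 ≤ a ≤ b ≤ n`, the
interval `[a,b]` is the disjoint concatenation, in increasing order, of at most
`2⌈log₂ n⌉ + 2` ranges, each of which labels a node of the range tree over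
`[1,n]` built with `mid(l,r) = ⌊(l+r)/2⌋`. -/
theorem interval_decomposition (n a b : ℕ) (ha : 1 ≤ a) (hab : a ≤ b) (hb : b ≤ n) :
    ∃ L : List (ℕ × ℕ),
      L ≠ [] ∧
      (∀ p ∈ L, MidNode 1 n p.1 p.2) ∧
      (L.head?.map Prod.fst = some a) ∧
      (L.getLast?.map Prod.snd = some b) ∧
      List.Chain' (fun p q : ℕ × ℕ => q.1 = p.2 + 1) L ∧
      (∀ p ∈ L, p.1 ≤ p.2) ∧
      L.length ≤ 2 * Nat.clog 2 n + 2 := by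
  obtain ⟨L, ⟨h1, h2, h3, h4, h5, h6⟩, hlen⟩ :=
    main_dec n 1 n a b (by omega) ha hab hb
  have hn : n - 1 + 1 = n := by omega
  rw [hn] at hlen
  exact ⟨L, h1, h2, h3, h4, h5, h6, hlen⟩
end
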